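/- For every n ≥ 2, the word w = (x_0 x_1 ⋯ x_{n-1}) · (x_0⁻¹ x_1⁻¹ ⋯ x_{n-1}⁻¹) (all generators in order, followed by all their inverses in the same order) is a solution to the (n−1)-out-of-n picture-hanging puzzle and has length 2n; moreover, every solution w' to the (n−1)-out-of-n puzzle satisfies |w'| ≥ 2n. Hence the minimum length of a solution to the (n−1)-out-of-n puzzle is exactly 2n. -/

import Mathlib

/-- The removal homomorphism: kills the generators with index in `S`. -/
def kill {n : ℕ} (S : Finset (Fin n)) : FreeGroup (Fin n) →* FreeGroup (Fin n) :=
  FreeGroup.lift fun i => if i ∈ S then 1 else FreeGroup.of i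

/-- `w` is a solution to the `k`-out-of-`n` picture-hanging puzzle (Demaine convention). -/
def IsSolution {n : ℕ} (k : ℕ) (w : FreeGroup (Fin n)) : Prop :=
  ∀ S : Finset (Fin n),
    (k ≤ S.card → kill S w = 1) ∧ (S.card < k → kill S w ≠ 1)

section Aux

lemma reduce_self_of_chain {α : Type*} [DecidableEq α] : ∀ (L : List (α × Bool)),
    L.Chain' (fun a b => a.1 = b.1 → a.2 = b.2) → FreeGroup.reduce L = L
  | [], _ => rfl
  | [_], _ => rfl
  | x :: y :: L, h => by
    have h1 : FreeGroup.reduce (y :: L) = y :: L :=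
      reduce_self_of_chain (y :: L) h.tail
    have h2 : x.1 = y.1 → x.2 = y.2 := (List.isChain_cons_cons.mp h).1
    rw [FreeGroup.reduce.cons, h1]
    show (if x.1 = y.1 ∧ x.2 = !y.2 then L else x :: y :: L) = x :: y :: L
    rw [if_neg]
    rintro ⟨e1, e2⟩
    have := h2 e1
    rw [this] at e2
    simp at e2

lemma mk_single_true {α : Type*} (a : α) : FreeGroup.mk [(a, true)] = FreeGroup.of a := rfl

lemma mk_single_false {α : Type*} (a : α) : FreeGroup.mk [(a, false)] = (FreeGroup.of a)⁻¹ := by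
  rw [show FreeGroup.of a = FreeGroup.mk [(a, true)] from rfl, FreeGroup.inv_mk]
  simp [FreeGroup.invRev]

lemma prod_map_of {α : Type*} (l : List α) :
    (l.map FreeGroup.of).prod = FreeGroup.mk (l.map fun i => (i, true)) := by
  induction l with
  | nil => simp [FreeGroup.one_eq_mk]
  | cons a l ih =>
    rw [List.map_cons, List.prod_cons, ih, ← mk_single_true a, FreeGroup.mul_mk,
      List.singleton_append, List.map_cons]

lemma prod_map_inv {α : Type*} (l : List α) :
    (l.map fun i => (FreeGroup.of i)⁻¹).prod = FreeGroup.mk (l.map fun i => (i, false)) := by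
  induction l with
  | nil => simp [FreeGroup.one_eq_mk]
  | cons a l ih =>
    rw [List.map_cons, List.prod_cons, ih, ← mk_single_false a, FreeGroup.mul_mk,
      List.singleton_append, List.map_cons]

lemma kill_of {n : ℕ} (S : Finset (Fin n)) (a : Fin n) :
    kill S (FreeGroup.of a) = if a ∈ S then 1 else FreeGroup.of a := by
  simp [kill]

lemma kill_mk {n : ℕ} (S : Finset (Fin n)) (L : List (Fin n × Bool)) :
    kill S (FreeGroup.mk L) = FreeGroup.mk (L.filter fun p => decide (p.1 ∉ S)) := by
  induction L with
  | nil =>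
    rw [← FreeGroup.one_eq_mk, map_one, List.filter_nil, FreeGroup.one_eq_mk]
  | cons p L ih =>
    rw [show FreeGroup.mk (p :: L) = FreeGroup.mk [p] * FreeGroup.mk L by
      rw [FreeGroup.mul_mk]; rfl, map_mul, ih, List.filter_cons]
    have hsingle : kill S (FreeGroup.mk [p]) =
        if p.1 ∈ S then 1 else FreeGroup.mk [p] := by
      obtain ⟨a, b⟩ := p
      cases b
      · rw [mk_single_false, map_inv, kill_of]
        by_cases h : a ∈ S <;> simp [h, mk_single_false]
      · rw [mk_single_true, kill_of]
    by_cases h : p.1 ∈ S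
    · simp only [h, if_pos, hsingle, decide_eq_true_eq, not_true_eq_false, one_mul]
      simp [h]
    · have : (decide (p.1 ∉ S)) = true := by simpa using h
      rw [this, if_pos rfl, hsingle, if_neg h, FreeGroup.mul_mk, List.singleton_append]

lemma chain_word {α : Type*} (T : List α) (hT : T.Nodup) (hlen : 2 ≤ T.length) :
    List.Chain' (fun a b : α × Bool => a.1 = b.1 → a.2 = b.2)
      (T.map (fun i => (i, true)) ++ T.map (fun i => (i, false))) := by
  show List.IsChain _ _
  rw [List.isChain_append]
  refine ⟨?_, ?_, ?_⟩
  · exact List.Pairwise.isChain (by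
      rw [List.pairwise_map]
      exact hT.imp (fun _ _ => rfl))
  · exact List.Pairwise.isChain (by
      rw [List.pairwise_map]
      exact hT.imp (fun _ _ => rfl))
  · intro x hx y hy
    match T, hlen, hT with
    | a :: b :: T', _, hT =>
      simp only [List.getLast?_map] at hx
      simp only [List.map_cons, List.head?_cons] at hy
      obtain ⟨g, hg, rfl⟩ : ∃ g, g ∈ (a :: b :: T').getLast? ∧ x = (g, true) := by
        rcases hgl : (a :: b :: T').getLast? with _ | g
        · simp [hgl] at hx
        · rw [hgl] at hx; exact ⟨g, by simp, by simpa using hx.symm⟩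
      have hy' : y = (a, false) := by simpa using hy.symm
      subst hy'
      intro hcontr
      exfalso
      rw [List.getLast?_cons_cons] at hg
      have hmem : g ∈ b :: T' := List.mem_of_mem_getLast? hg
      have : a ∉ b :: T' := (List.nodup_cons.mp hT).1
      simp only [] at hcontr
      exact this (hcontr ▸ hmem)

lemma sum_length_filter {n : ℕ} (L : List (Fin n × Bool)) :
    ∑ i : Fin n, (L.filter fun p => decide (p.1 = i)).length = L.length := by
  induction L with
  | nil => simp
  | cons p L ih =>
    simp only [List.filter_cons, List.length_cons]
    have key : ∀ i : Fin n,
        (if (decide (p.1 = i)) = true then p :: (L.filter fun q => decide (q.1 = i))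
          else (L.filter fun q => decide (q.1 = i))).length
        = (L.filter fun q => decide (q.1 = i)).length + if p.1 = i then 1 else 0 := by
      intro i
      by_cases h : p.1 = i <;> simp [h]
    rw [Finset.sum_congr rfl (fun i _ => key i), Finset.sum_add_distrib, ih,
      Finset.sum_ite_eq]
    simp

lemma length_filter_mem {n : ℕ} (S : Finset (Fin n)) :
    ((List.finRange n).filter fun i => decide (i ∉ S)).length = n - S.card := by
  have nd : ((List.finRange n).filter fun i => decide (i ∉ S)).Nodup :=
    (List.nodup_finRange n).filter _
  have hset : ((List.finRange n).filter fun i => decide (i ∉ S)).toFinset = Sᶜ := by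
    ext x
    simp [List.mem_filter]
  have := List.toFinset_card_of_nodup nd
  rw [hset] at this
  rw [← this, Finset.card_compl, Fintype.card_fin]

/-- The candidate word is a solution. -/
lemma isSolution_word (n : ℕ) (hn : 2 ≤ n) :
    IsSolution (n - 1)
      (FreeGroup.mk ((List.finRange n).map (fun i => (i, true)) ++
        (List.finRange n).map (fun i => (i, false)))) := by
  intro S
  set T : List (Fin n) := (List.finRange n).filter fun i => decide (i ∉ S) with hT
  have hTlen : T.length = n - S.card := length_filter_mem S
  have hTnd : T.Nodup := (List.nodup_finRange n).filter _
  have hfilter :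
      (((List.finRange n).map (fun i => (i, true)) ++
        (List.finRange n).map (fun i => (i, false))).filter
          fun p : Fin n × Bool => decide (p.1 ∉ S))
      = T.map (fun i => (i, true)) ++ T.map (fun i => (i, false)) := by
    rw [List.filter_append, List.filter_map, List.filter_map]
    rfl
  have hkill :
      kill S (FreeGroup.mk ((List.finRange n).map (fun i => (i, true)) ++
        (List.finRange n).map (fun i => (i, false))))
      = FreeGroup.mk (T.map (fun i => (i, true)) ++ T.map (fun i => (i, false))) := by
    rw [kill_mk, hfilter]
  have hScard : S.card ≤ n := by
    simpa using Finset.card_le_univ S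
  constructor
  · intro hS
    rw [hkill]
    have hT1 : T.length ≤ 1 := by omega
    rcases T with _ | ⟨a, _ | ⟨b, T'⟩⟩
    · simp [← FreeGroup.one_eq_mk]
    · show FreeGroup.mk ([(a, true)] ++ [(a, false)]) = 1
      rw [← FreeGroup.mul_mk, mk_single_true, mk_single_false]
      simp
    · simp at hT1
  · intro hS hone
    have hT2 : 2 ≤ T.length := by omega
    rw [hkill] at hone
    have hred := reduce_self_of_chain _ (chain_word T hTnd hT2)
    have htw : (FreeGroup.mk (T.map (fun i => (i, true)) ++
        T.map (fun i => (i, false)))).toWord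
        = T.map (fun i => (i, true)) ++ T.map (fun i => (i, false)) := by
      rw [FreeGroup.toWord_mk, hred]
    rw [hone, FreeGroup.toWord_one] at htw
    have := congrArg List.length htw
    simp at this
    omega

/-- Lower bound: any solution has norm at least `2 * n`. -/
lemma lower_bound (n : ℕ) (hn : 2 ≤ n) (w : FreeGroup (Fin n))
    (hw : IsSolution (n - 1) w) : 2 * n ≤ FreeGroup.norm w := by
  have : Nontrivial (Fin n) := Fin.nontrivial_iff_two_le.mpr hn
  set L : List (Fin n × Bool) := w.toWord with hL
  have hmk : FreeGroup.mk L = w := FreeGroup.mk_toWord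
  have hgen : ∀ k : Fin n, FreeGroup.mk (L.filter fun p => decide (p.1 = k)) = 1 := by
    intro k
    have hcard : n - 1 ≤ ({k}ᶜ : Finset (Fin n)).card := by
      rw [Finset.card_compl, Finset.card_singleton, Fintype.card_fin]
    have h1 := (hw {k}ᶜ).1 hcard
    rw [← hmk, kill_mk] at h1
    have hpeq : (fun p : Fin n × Bool => decide (p.1 ∉ ({k}ᶜ : Finset (Fin n))))
        = fun p => decide (p.1 = k) := by
      funext p
      simp
    rwa [hpeq] at h1
  have hkey : ∀ i : Fin n, 2 ≤ (L.filter fun p => decide (p.1 = i)).length := by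
    intro i
    have hne : (L.filter fun p => decide (p.1 = i)) ≠ [] := by
      intro h0
      obtain ⟨j, hj⟩ := exists_ne i
      have hij : i ≠ j := hj.symm
      have hcard : ({i, j}ᶜ : Finset (Fin n)).card < n - 1 := by
        rw [Finset.card_compl, Finset.card_pair hij, Fintype.card_fin]
        omega
      apply (hw ({i, j}ᶜ)).2 hcard
      rw [← hmk, kill_mk]
      have hall : ∀ p ∈ L, ¬ (decide (p.1 = i) = true) := List.filter_eq_nil_iff.mp h0
      have hfeq : (L.filter fun p : Fin n × Bool => decide (p.1 ∉ ({i, j}ᶜ : Finset (Fin n))))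
          = L.filter fun p => decide (p.1 = j) := by
        apply List.filter_congr
        intro p hp
        have hpi : p.1 ≠ i := by simpa using hall p hp
        simp [hpi]
      rw [hfeq]
      exact hgen j
    have hne1 : (L.filter fun p => decide (p.1 = i)).length ≠ 1 := by
      intro h1
      obtain ⟨p, hp⟩ := List.length_eq_one_iff.mp h1
      have := hgen i
      rw [hp] at this
      have htw := congrArg FreeGroup.toWord this
      rw [FreeGroup.toWord_mk, FreeGroup.reduce_singleton, FreeGroup.toWord_one] at htw
      exact List.cons_ne_nil p [] htw
    have := List.length_eq_zero_iff.not.mpr hne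
    omega
  have hsum := sum_length_filter L
  have : 2 * n ≤ ∑ i : Fin n, (L.filter fun p => decide (p.1 = i)).length := by
    calc 2 * n = ∑ _i : Fin n, 2 := by simp [Finset.sum_const, Fintype.card_fin, mul_comm]
    _ ≤ _ := Finset.sum_le_sum fun i _ => hkey i
  rw [hsum] at this
  exact this

end Aux

theorem n_minus_one_out_of_n_min_length (n : ℕ) (hn : 2 ≤ n) :
    IsSolution (n - 1)
      (((List.finRange n).map FreeGroup.of).prod *
        ((List.finRange n).map (fun i => (FreeGroup.of i)⁻¹)).prod) ∧
    FreeGroup.norm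
      (((List.finRange n).map FreeGroup.of).prod *
        ((List.finRange n).map (fun i => (FreeGroup.of i)⁻¹)).prod) = 2 * n ∧
    ∀ w : FreeGroup (Fin n), IsSolution (n - 1) w → 2 * n ≤ FreeGroup.norm w := by
  rw [prod_map_of, prod_map_inv, FreeGroup.mul_mk]
  have hsol := isSolution_word n hn
  refine ⟨hsol, ?_, fun w hw => lower_bound n hn w hw⟩
  have hle : FreeGroup.norm (FreeGroup.mk ((List.finRange n).map (fun i => (i, true)) ++
      (List.finRange n).map (fun i => (i, false)))) ≤ 2 * n := by
    calc _ ≤ ((List.finRange n).map (fun i : Fin n => (i, true)) ++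
        (List.finRange n).map (fun i : Fin n => (i, false))).length := FreeGroup.norm_mk_le
    _ = 2 * n := by simp; omega
  have hge := lower_bound n hn _ hsol
  omega
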